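/- Let Γ be the free group on s₁, s₂ or Γ = ℤ≀ℤ, I ⊆ ℕ, t_k = s₂^k s₁ s₂^{-k}, Λ_I = ⟨t_k : k ∈ I⟩. Let P = {g s₂^{-n}, …, g s₂^{-1}, g, g s₁, g s₁ s₂^{-1}, …, g s₁ s₂^{-m}} be a hook with n, m ≥ 1 finite. Then for distinct x, y ∈ P and t ∈ Λ_I, the relation x·t = y holds if and only if t = t_k^{±1} for some k ∈ I with k ≤ n and k ≤ m, and {x, y} = {g s₂^{-k}, g s₁ s₂^{-k}} (matched in the order determined by the sign of the exponent). -/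

import Mathlib

open scoped commutatorElement

/-- The relations of `ℤ ≀ ℤ = ⟨s₁, s₂ | [s₂^k s₁ s₂^{-k}, s₁] = 1, k ∈ ℤ⟩`, with
`s₁ = FreeGroup.of false` and `s₂ = FreeGroup.of true`. -/
def wreathRels : Set (FreeGroup Bool) :=
  {r | ∃ k : ℤ,
    r = ⁅(FreeGroup.of true) ^ k * FreeGroup.of false * (FreeGroup.of true) ^ (-k),
        FreeGroup.of false⁆}

/-- `Γ` is free on the two generators `s₁, s₂`. -/
def IsFreeOn {Γ : Type*} [Group Γ] (s₁ s₂ : Γ) : Prop :=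
  ∃ e : FreeGroup Bool ≃* Γ, e (FreeGroup.of false) = s₁ ∧ e (FreeGroup.of true) = s₂

/-- `Γ` is `ℤ ≀ ℤ` with distinguished generators `s₁, s₂`. -/
def IsZwrZ {Γ : Type*} [Group Γ] (s₁ s₂ : Γ) : Prop :=
  ∃ e : PresentedGroup wreathRels ≃* Γ,
    e (PresentedGroup.of false) = s₁ ∧ e (PresentedGroup.of true) = s₂

namespace Stmt15Aux

/-- The base group of the concrete wreath product `ℤ ≀ ℤ`, written multiplicatively. -/
abbrev NN : Type := Multiplicative (ℤ →₀ ℤ)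

/-- The shift automorphism of the base group. -/
def shiftAut (n : ℤ) : NN ≃* NN where
  toFun x := .ofAdd (Finsupp.equivMapDomain (Equiv.addLeft n) x.toAdd)
  invFun x := .ofAdd (Finsupp.equivMapDomain (Equiv.addLeft n).symm x.toAdd)
  left_inv x := by
    refine Multiplicative.toAdd.injective ?_
    ext a
    simp [Finsupp.equivMapDomain_apply]
  right_inv x := by
    refine Multiplicative.toAdd.injective ?_
    ext a
    simp [Finsupp.equivMapDomain_apply]
  map_mul' x y := by
    refine Multiplicative.toAdd.injective ?_
    ext a
    simp [Finsupp.equivMapDomain_apply, Finsupp.add_apply]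

lemma shiftAut_toAdd_apply (n : ℤ) (x : NN) (a : ℤ) :
    ((shiftAut n x).toAdd) a = x.toAdd (-n + a) := by
  show (Finsupp.equivMapDomain (Equiv.addLeft n) x.toAdd) a = _
  simp [Finsupp.equivMapDomain_apply]

/-- The shift action of `ℤ` on the base group. -/
def shiftHom : Multiplicative ℤ →* MulAut NN where
  toFun z := shiftAut z.toAdd
  map_one' := by
    refine MulEquiv.ext fun x => ?_
    refine Multiplicative.toAdd.injective ?_
    ext a
    rw [shiftAut_toAdd_apply]
    norm_num
  map_mul' z w := by
    refine MulEquiv.ext fun x => ?_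
    refine Multiplicative.toAdd.injective ?_
    ext a
    show ((shiftAut (z * w).toAdd x).toAdd) a
      = ((shiftAut z.toAdd ((shiftAut w.toAdd) x)).toAdd) a
    rw [shiftAut_toAdd_apply, shiftAut_toAdd_apply, shiftAut_toAdd_apply]
    congr 1
    have : (z * w).toAdd = z.toAdd + w.toAdd := rfl
    rw [this]; ring

/-- The concrete wreath product `ℤ ≀ ℤ`. -/
abbrev W : Type := SemidirectProduct NN (Multiplicative ℤ) shiftHom

noncomputable def s1W : W := SemidirectProduct.inl (Multiplicative.ofAdd (Finsupp.single 0 1))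
noncomputable def s2W : W := SemidirectProduct.inr (Multiplicative.ofAdd 1)

lemma s2W_zpow (k : ℤ) : s2W ^ k = SemidirectProduct.inr (Multiplicative.ofAdd k) := by
  rw [s2W, ← map_zpow]
  congr 1
  rw [← ofAdd_zsmul]
  simp

lemma tW (k : ℤ) : s2W ^ k * s1W * s2W ^ (-k)
    = SemidirectProduct.inl (Multiplicative.ofAdd (Finsupp.single k 1)) := by
  rw [s2W_zpow, s2W_zpow, s1W]
  have h := SemidirectProduct.inl_aut (φ := shiftHom) (Multiplicative.ofAdd k)
    (Multiplicative.ofAdd (Finsupp.single 0 1))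
  rw [show Multiplicative.ofAdd (-k) = (Multiplicative.ofAdd k)⁻¹ from rfl, ← h]
  congr 1
  refine Multiplicative.toAdd.injective ?_
  ext a
  show ((shiftAut (Multiplicative.ofAdd k).toAdd _).toAdd) a = (Finsupp.single k 1) a
  rw [shiftAut_toAdd_apply]
  show (Finsupp.single (0:ℤ) (1:ℤ)) _ = _
  rw [Finsupp.single_apply, Finsupp.single_apply]
  have : (Multiplicative.ofAdd k).toAdd = k := rfl
  rw [this]
  by_cases hk : k = a
  · simp [hk]
  · rw [if_neg hk, if_neg (by omega)]

lemma inl_comm (a b : NN) :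
    (SemidirectProduct.inl a : W) * SemidirectProduct.inl b
      = SemidirectProduct.inl b * SemidirectProduct.inl a := by
  rw [← map_mul, ← map_mul, mul_comm]

/-- The main statement, proved for any group equipped with a homomorphism onto the
concrete wreath product sending `s₁, s₂` to the standard generators. -/
lemma key {Γ : Type*} [Group Γ] (s₁ s₂ : Γ) (ρ : Γ →* W)
    (h1 : ρ s₁ = s1W) (h2 : ρ s₂ = s2W)
    (I : Set ℕ)
    (t : ℕ → Γ) (ht : ∀ k, t k = s₂ ^ k * s₁ * s₂ ^ (-(k : ℤ)))
    (Λ : Subgroup Γ) (hΛ : Λ = Subgroup.closure {x | ∃ k ∈ I, x = t k})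
    (g : Γ) (n m : ℕ)
    (P : Set Γ)
    (hP : P = (fun i : ℕ => g * s₂ ^ (-(i : ℤ))) '' {i | i ≤ n} ∪
          (fun j : ℕ => g * s₁ * s₂ ^ (-(j : ℤ))) '' {j | j ≤ m}) :
    ∀ x ∈ P, ∀ y ∈ P, x ≠ y → ∀ τ ∈ Λ,
      (x * τ = y ↔ ∃ k ∈ I, k ≤ n ∧ k ≤ m ∧
        ((τ = t k ∧ x = g * s₂ ^ (-(k : ℤ)) ∧ y = g * s₁ * s₂ ^ (-(k : ℤ))) ∨
         (τ = (t k)⁻¹ ∧ x = g * s₁ * s₂ ^ (-(k : ℤ)) ∧ y = g * s₂ ^ (-(k : ℤ))))) := by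
  have hρt : ∀ k : ℕ, ρ (t k)
      = SemidirectProduct.inl (Multiplicative.ofAdd (Finsupp.single (k:ℤ) 1)) := by
    intro k
    rw [ht, map_mul, map_mul, map_pow, map_zpow, h1, h2, ← zpow_natCast s2W k, tW]
  set ν : Γ →* Multiplicative ℤ := SemidirectProduct.rightHom.comp ρ with hνdef
  have hν1 : ν s₁ = 1 := by
    simp [hνdef, h1, s1W]
  have hν2 : ν s₂ = Multiplicative.ofAdd 1 := by
    simp [hνdef, h2, s2W]
  have hνt : ∀ k : ℕ, ν (t k) = 1 := by
    intro k
    simp [hνdef, hρt k]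
  have hle : Subgroup.closure {x | ∃ k ∈ I, x = t k} ≤ ν.ker := by
    rw [Subgroup.closure_le]
    rintro x ⟨k, hk, rfl⟩
    exact hνt k
  have hνΛ : ∀ τ ∈ Λ, ν τ = 1 := by
    intro τ hτ
    exact hle (hΛ ▸ hτ)
  have hνleg1 : ∀ i : ℕ, ν (g * s₂ ^ (-(i:ℤ))) = ν g * Multiplicative.ofAdd (-(i:ℤ)) := by
    intro i
    rw [map_mul, map_zpow, hν2, ← ofAdd_zsmul, smul_eq_mul, mul_one]
  have hνleg2 : ∀ i : ℕ, ν (g * s₁ * s₂ ^ (-(i:ℤ))) = ν g * Multiplicative.ofAdd (-(i:ℤ)) := by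
    intro i
    rw [map_mul, map_mul, map_zpow, hν1, hν2, mul_one, ← ofAdd_zsmul, smul_eq_mul, mul_one]
  have hmemI : ∀ i : ℕ, t i ∈ Λ → i ∈ I := by
    intro i hi
    by_contra hiI
    have h1' : ρ (t i) ∈ (Subgroup.closure {x | ∃ k ∈ I, x = t k}).map ρ :=
      ⟨t i, hΛ ▸ hi, rfl⟩
    rw [MonoidHom.map_closure] at h1'
    set T : Set NN := {a | ∃ k ∈ I, a = Multiplicative.ofAdd (Finsupp.single (k:ℤ) 1)} with hT
    have hsub : ρ '' {x | ∃ k ∈ I, x = t k}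
        ⊆ (SemidirectProduct.inl : NN →* W) '' T := by
      rintro _ ⟨x, ⟨k, hk, rfl⟩, rfl⟩
      exact ⟨_, ⟨k, hk, rfl⟩, (hρt k).symm⟩
    have h2' : ρ (t i) ∈ Subgroup.closure ((SemidirectProduct.inl : NN →* W) '' T) :=
      Subgroup.closure_mono hsub h1'
    rw [← MonoidHom.map_closure] at h2'
    obtain ⟨b, hb, hbe⟩ := h2'
    rw [hρt i] at hbe
    have hbeq : b = Multiplicative.ofAdd (Finsupp.single (i:ℤ) 1) :=
      SemidirectProduct.inl_injective hbe
    set ev : NN →* Multiplicative ℤ :=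
      AddMonoidHom.toMultiplicative (Finsupp.applyAddHom (i:ℤ)) with hev
    have hevT : Subgroup.closure T ≤ ev.ker := by
      rw [Subgroup.closure_le]
      rintro _ ⟨k, hk, rfl⟩
      have hki : (k:ℤ) ≠ (i:ℤ) := by
        intro h
        exact hiI ((Nat.cast_injective h : k = i) ▸ hk)
      show ev (Multiplicative.ofAdd (Finsupp.single (k:ℤ) 1)) = 1
      have : ev (Multiplicative.ofAdd (Finsupp.single (k:ℤ) 1))
          = Multiplicative.ofAdd ((Finsupp.single (k:ℤ) (1:ℤ)) (i:ℤ)) := rfl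
      rw [this, Finsupp.single_apply, if_neg hki]
      rfl
    have hcon := hevT hb
    rw [MonoidHom.mem_ker, hbeq] at hcon
    have : ev (Multiplicative.ofAdd (Finsupp.single (i:ℤ) 1))
        = Multiplicative.ofAdd ((Finsupp.single (i:ℤ) (1:ℤ)) (i:ℤ)) := rfl
    rw [this, Finsupp.single_apply, if_pos rfl] at hcon
    exact one_ne_zero (Multiplicative.ofAdd.injective hcon)
  intro x hx y hy hxy τ hτ
  constructor
  · intro hxyτ
    have hτeq : τ = x⁻¹ * y := by rw [← hxyτ]; group
    have hνxy : ν x = ν y := by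
      have h0 := hνΛ τ hτ
      calc ν x = ν x * ν τ := by rw [h0, mul_one]
        _ = ν (x * τ) := (map_mul ν x τ).symm
        _ = ν y := by rw [hxyτ]
    rw [hP] at hx hy
    rcases hx with ⟨i, hi, rfl⟩ | ⟨i, hi, rfl⟩ <;>
      rcases hy with ⟨j, hj, rfl⟩ | ⟨j, hj, rfl⟩
    · exfalso
      rw [hνleg1 i, hνleg1 j] at hνxy
      have := Multiplicative.ofAdd.injective (mul_left_cancel hνxy)
      have hij : i = j := by omega
      exact hxy (by rw [hij])
    · rw [hνleg1 i, hνleg2 j] at hνxy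
      have := Multiplicative.ofAdd.injective (mul_left_cancel hνxy)
      have hij : i = j := by omega
      subst hij
      have hτt : τ = t i := by
        rw [hτeq, ht, ← zpow_natCast s₂ i]
        group
      exact ⟨i, hmemI i (hτt ▸ hτ), hi, hj, Or.inl ⟨hτt, rfl, rfl⟩⟩
    · rw [hνleg2 i, hνleg1 j] at hνxy
      have := Multiplicative.ofAdd.injective (mul_left_cancel hνxy)
      have hij : i = j := by omega
      subst hij
      have hτt : τ = (t i)⁻¹ := by
        rw [hτeq, ht, ← zpow_natCast s₂ i]
        group
      have htΛ : t i ∈ Λ := by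
        have : t i = τ⁻¹ := by rw [hτt, inv_inv]
        rw [this]
        exact inv_mem hτ
      exact ⟨i, hmemI i htΛ, hj, hi, Or.inr ⟨hτt, rfl, rfl⟩⟩
    · exfalso
      rw [hνleg2 i, hνleg2 j] at hνxy
      have := Multiplicative.ofAdd.injective (mul_left_cancel hνxy)
      have hij : i = j := by omega
      exact hxy (by rw [hij])
  · rintro ⟨k, hkI, hkn, hkm, ⟨hτ', hx', hy'⟩ | ⟨hτ', hx', hy'⟩⟩
    · subst hτ' hx' hy'
      rw [ht, ← zpow_natCast s₂ k]
      group
    · subst hτ' hx' hy'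
      rw [ht, ← zpow_natCast s₂ k]
      group

/-- The distinguished generators of `FreeGroup Bool` mapped to the concrete wreath product. -/
noncomputable def fW : Bool → W := fun b => if b then s2W else s1W

lemma hrels : ∀ r ∈ wreathRels, FreeGroup.lift fW r = 1 := by
  rintro r ⟨k, rfl⟩
  rw [map_commutatorElement]
  simp only [map_mul, map_zpow, FreeGroup.lift_apply_of, fW, Bool.false_eq_true,
    not_false_iff, ite_true, ite_false]
  rw [commutatorElement_eq_one_iff_mul_comm, tW, s1W]
  exact inl_comm _ _

/-- Both a free group on `s₁, s₂` and `ℤ ≀ ℤ` admit a homomorphism to the concrete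
wreath product sending `s₁, s₂` to the standard generators. -/
lemma exists_rho {Γ : Type*} [Group Γ] (s₁ s₂ : Γ) (hΓ : IsFreeOn s₁ s₂ ∨ IsZwrZ s₁ s₂) :
    ∃ ρ : Γ →* W, ρ s₁ = s1W ∧ ρ s₂ = s2W := by
  rcases hΓ with ⟨e, he1, he2⟩ | ⟨e, he1, he2⟩
  · refine ⟨(FreeGroup.lift fW).comp e.symm.toMonoidHom, ?_, ?_⟩
    · rw [← he1]
      simp [fW]
    · rw [← he2]
      simp [fW]
  · refine ⟨(PresentedGroup.toGroup hrels).comp e.symm.toMonoidHom, ?_, ?_⟩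
    · rw [← he1]
      simp [PresentedGroup.toGroup.of, fW]
    · rw [← he2]
      simp [PresentedGroup.toGroup.of, fW]

end Stmt15Aux

/-- in `Γ` (free on `s₁,s₂` or `ℤ≀ℤ`), with `t_k = s₂^k s₁ s₂^{-k}` and
`Λ_I = ⟨t_k : k ∈ I⟩`, for distinct points `x ≠ y` of a hook `P` (left leg of length `n`,
right leg of length `m`) and `τ ∈ Λ_I`, the relation `x·τ = y` holds iff `τ = t_k^{±1}`
for some `k ∈ I` with `k ≤ n`, `k ≤ m`, and `{x,y} = {g s₂^{-k}, g s₁ s₂^{-k}}`, matched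
according to the sign. -/
theorem stmt_15 {Γ : Type*} [Group Γ] (s₁ s₂ : Γ)
    (hΓ : IsFreeOn s₁ s₂ ∨ IsZwrZ s₁ s₂)
    (I : Set ℕ)
    (t : ℕ → Γ) (ht : ∀ k, t k = s₂ ^ k * s₁ * s₂ ^ (-(k : ℤ)))
    (Λ : Subgroup Γ) (hΛ : Λ = Subgroup.closure {x | ∃ k ∈ I, x = t k})
    (g : Γ) (n m : ℕ) (hn : 1 ≤ n) (hm : 1 ≤ m)
    (P : Set Γ)
    (hP : P = (fun i : ℕ => g * s₂ ^ (-(i : ℤ))) '' {i | i ≤ n} ∪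
          (fun j : ℕ => g * s₁ * s₂ ^ (-(j : ℤ))) '' {j | j ≤ m}) :
    ∀ x ∈ P, ∀ y ∈ P, x ≠ y → ∀ τ ∈ Λ,
      (x * τ = y ↔ ∃ k ∈ I, k ≤ n ∧ k ≤ m ∧
        ((τ = t k ∧ x = g * s₂ ^ (-(k : ℤ)) ∧ y = g * s₁ * s₂ ^ (-(k : ℤ))) ∨
         (τ = (t k)⁻¹ ∧ x = g * s₁ * s₂ ^ (-(k : ℤ)) ∧ y = g * s₂ ^ (-(k : ℤ))))) := by
  obtain ⟨ρ, h1, h2⟩ := Stmt15Aux.exists_rho s₁ s₂ hΓ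
  exact Stmt15Aux.key s₁ s₂ ρ h1 h2 I t ht Λ hΛ g n m P hP
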